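/- Let 𝔞 be abelian in Sym(V) with weights α_1,...,α_n in an orthonormal eigenbasis v_1,...,v_n, A = exp(𝔞) acting on ℙ(V), with projective gradient map μ̃_𝔞([x])(ξ) = ⟨ξx,x⟩/‖x‖². For [x] ∈ ℙ(V) with representative x̃ of support I, the image μ̃_𝔞(closure(A·[x])) equals the polytope P_I = Conv{α_i : i ∈ I}. -/

import Mathlib

open RealInnerProductSpace Finset Classical

lemma aux_exp_eigen {V : Type*} [NormedAddCommGroup V] [NormedSpace ℝ V] [CompleteSpace V]
    (A : V →L[ℝ] V) (a : ℝ) (w : V) (h : A w = a • w) :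
    NormedSpace.exp A w = Real.exp a • w := by
  have hpow : ∀ k : ℕ, (A ^ k) w = a ^ k • w := by
    intro k; induction k with
    | zero => simp
    | succ k ih =>
      rw [pow_succ, pow_succ, ContinuousLinearMap.mul_apply, h, map_smul, ih, smul_smul,
        mul_comm]
  have hs : Summable fun k : ℕ => ((Nat.factorial k : ℝ))⁻¹ • A ^ k := NormedSpace.expSeries_summable' A
  have happ : NormedSpace.exp A w = ∑' k : ℕ, (((Nat.factorial k : ℝ))⁻¹ • A ^ k) w := by
    rw [NormedSpace.exp_eq_tsum ℝ]
    exact ((ContinuousLinearMap.apply ℝ V w).map_tsum hs)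
  rw [happ]
  have : ∀ k : ℕ, (((Nat.factorial k : ℝ))⁻¹ • A ^ k) w = (((Nat.factorial k : ℝ))⁻¹ * a ^ k) • w := by
    intro k; rw [ContinuousLinearMap.smul_apply, hpow, smul_smul]
  rw [tsum_congr this]
  have hs2 : Summable fun k : ℕ => ((Nat.factorial k : ℝ))⁻¹ * a ^ k := by
    simpa [smul_eq_mul] using NormedSpace.expSeries_summable' (𝕂 := ℝ) a
  rw [Summable.tsum_smul_const hs2]
  congr 1
  rw [Real.exp_eq_exp_ℝ, NormedSpace.exp_eq_tsum ℝ]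
  simp [smul_eq_mul]

lemma aux_holder {n : ℕ} (b X Y : Fin n → ℝ) (hb : ∀ i, 0 ≤ b i)
    (hU : 0 < ∑ i, b i * Real.exp (X i)) (hW : 0 < ∑ i, b i * Real.exp (Y i))
    (θ1 θ2 : ℝ) (h1 : 0 ≤ θ1) (h2 : 0 ≤ θ2) (hsum : θ1 + θ2 = 1) :
    ∑ i, b i * Real.exp (θ1 * X i + θ2 * Y i) ≤
      (∑ i, b i * Real.exp (X i)) ^ θ1 * (∑ i, b i * Real.exp (Y i)) ^ θ2 := by
  rcases eq_or_lt_of_le h1 with h1' | h1'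
  · have : θ2 = 1 := by linarith
    simp [← h1', this]
  rcases eq_or_lt_of_le h2 with h2' | h2'
  · have : θ1 = 1 := by linarith
    simp [← h2', this]
  set U := ∑ i, b i * Real.exp (X i) with hUdef
  set W := ∑ i, b i * Real.exp (Y i) with hWdef
  have key : ∀ i, b i * Real.exp (θ1 * X i + θ2 * Y i) ≤
      U ^ θ1 * W ^ θ2 * (θ1 * ((b i * Real.exp (X i)) / U) + θ2 * ((b i * Real.exp (Y i)) / W)) := by
    intro i
    set p := b i * Real.exp (X i) with hp
    set q := b i * Real.exp (Y i) with hq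
    have hp0 : 0 ≤ p := mul_nonneg (hb i) (Real.exp_pos _).le
    have hq0 : 0 ≤ q := mul_nonneg (hb i) (Real.exp_pos _).le
    have claim1 : b i * Real.exp (θ1 * X i + θ2 * Y i) = p ^ θ1 * q ^ θ2 := by
      rcases eq_or_lt_of_le (hb i) with hbi | hbi
      · rw [hp, hq, ← hbi]
        simp [Real.zero_rpow h1'.ne']
      · rw [hp, hq, Real.mul_rpow hbi.le (Real.exp_pos _).le,
          Real.mul_rpow hbi.le (Real.exp_pos _).le, ← Real.exp_mul, ← Real.exp_mul]
        calc b i * Real.exp (θ1 * X i + θ2 * Y i)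
            = (b i ^ θ1 * b i ^ θ2) * (Real.exp (X i * θ1) * Real.exp (Y i * θ2)) := by
              rw [← Real.rpow_add hbi, hsum, Real.rpow_one, ← Real.exp_add]
              ring_nf
          _ = b i ^ θ1 * Real.exp (X i * θ1) * (b i ^ θ2 * Real.exp (Y i * θ2)) := by ring
    have gm := Real.geom_mean_le_arith_mean2_weighted h1 h2
      (div_nonneg hp0 hU.le) (div_nonneg hq0 hW.le) hsum
    have hUW : 0 ≤ U ^ θ1 * W ^ θ2 :=
      mul_nonneg (Real.rpow_nonneg hU.le _) (Real.rpow_nonneg hW.le _)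
    have := mul_le_mul_of_nonneg_left gm hUW
    calc b i * Real.exp (θ1 * X i + θ2 * Y i) = p ^ θ1 * q ^ θ2 := claim1
      _ = U ^ θ1 * W ^ θ2 * ((p / U) ^ θ1 * (q / W) ^ θ2) := by
          rw [Real.div_rpow hp0 hU.le, Real.div_rpow hq0 hW.le]
          field_simp
      _ ≤ U ^ θ1 * W ^ θ2 * (θ1 * (p / U) + θ2 * (q / W)) := this
  calc ∑ i, b i * Real.exp (θ1 * X i + θ2 * Y i)
      ≤ ∑ i, U ^ θ1 * W ^ θ2 * (θ1 * ((b i * Real.exp (X i)) / U) + θ2 * ((b i * Real.exp (Y i)) / W)) :=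
        Finset.sum_le_sum fun i _ => key i
    _ = U ^ θ1 * W ^ θ2 * (θ1 * ((∑ i, b i * Real.exp (X i)) / U) + θ2 * ((∑ i, b i * Real.exp (Y i)) / W)) := by
        rw [← Finset.mul_sum]
        congr 1
        rw [Finset.sum_add_distrib, ← Finset.mul_sum, ← Finset.mul_sum, ← Finset.sum_div, ← Finset.sum_div]
    _ = U ^ θ1 * W ^ θ2 := by
        rw [← hUdef, ← hWdef, div_self hU.ne', div_self hW.ne']
        rw [mul_one, mul_one, hsum, mul_one]

lemma aux_sum_exp_pos {n : ℕ} (b Z : Fin n → ℝ) (hb : ∀ i, 0 ≤ b i) (j : Fin n) (hj : 0 < b j) :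
    0 < ∑ i, b i * Real.exp (Z i) := by
  have : 0 < b j * Real.exp (Z j) := mul_pos hj (Real.exp_pos _)
  refine lt_of_lt_of_le this (Finset.single_le_sum (f := fun i => b i * Real.exp (Z i))
    (fun i _ => mul_nonneg (hb i) (Real.exp_pos _).le) (Finset.mem_univ j))

lemma aux_logsumexp_convex {n : ℕ} (b A B : Fin n → ℝ) (hb : ∀ i, 0 ≤ b i)
    (j : Fin n) (hj : 0 < b j) :
    ConvexOn ℝ Set.univ (fun t : ℝ => Real.log (∑ i, b i * Real.exp (A i + B i * t))) := by
  refine ⟨convex_univ, fun t1 _ t2 _ θ1 θ2 h1 h2 hsum => ?_⟩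
  have hU := aux_sum_exp_pos b (fun i => A i + B i * t1) hb j hj
  have hW := aux_sum_exp_pos b (fun i => A i + B i * t2) hb j hj
  have hZ : ∀ i, A i + B i * (θ1 * t1 + θ2 * t2)
      = θ1 * (A i + B i * t1) + θ2 * (A i + B i * t2) := by
    intro i
    have : A i = (θ1 + θ2) * A i := by rw [hsum, one_mul]
    nlinarith [this]
  have hh := aux_holder b (fun i => A i + B i * t1) (fun i => A i + B i * t2) hb hU hW
    θ1 θ2 h1 h2 hsum
  have hmid : 0 < ∑ i, b i * Real.exp (A i + B i * (θ1 • t1 + θ2 • t2)) :=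
    aux_sum_exp_pos b _ hb j hj
  calc Real.log (∑ i, b i * Real.exp (A i + B i * (θ1 • t1 + θ2 • t2)))
      ≤ Real.log ((∑ i, b i * Real.exp (A i + B i * t1)) ^ θ1
          * (∑ i, b i * Real.exp (A i + B i * t2)) ^ θ2) := by
        apply Real.log_le_log hmid
        simp only [smul_eq_mul]
        calc ∑ i, b i * Real.exp (A i + B i * (θ1 * t1 + θ2 * t2))
            = ∑ i, b i * Real.exp (θ1 * (A i + B i * t1) + θ2 * (A i + B i * t2)) := by
              apply Finset.sum_congr rfl; intro i _; rw [hZ i]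
          _ ≤ _ := hh
    _ = θ1 * Real.log (∑ i, b i * Real.exp (A i + B i * t1))
        + θ2 * Real.log (∑ i, b i * Real.exp (A i + B i * t2)) := by
        rw [Real.log_mul (Real.rpow_pos_of_pos hU _).ne' (Real.rpow_pos_of_pos hW _).ne',
          Real.log_rpow hU, Real.log_rpow hW]

lemma aux_logsumexp_hasDerivAt {n : ℕ} (b A B : Fin n → ℝ) (hb : ∀ i, 0 ≤ b i)
    (j : Fin n) (hj : 0 < b j) (t0 : ℝ) :
    HasDerivAt (fun t : ℝ => Real.log (∑ i, b i * Real.exp (A i + B i * t)))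
      ((∑ i, b i * B i * Real.exp (A i + B i * t0)) / (∑ i, b i * Real.exp (A i + B i * t0))) t0 := by
  have hsum : HasDerivAt (fun t : ℝ => ∑ i, b i * Real.exp (A i + B i * t))
      (∑ i, b i * B i * Real.exp (A i + B i * t0)) t0 := by
    have : ∀ i ∈ Finset.univ, HasDerivAt (fun t : ℝ => b i * Real.exp (A i + B i * t))
        (b i * B i * Real.exp (A i + B i * t0)) t0 := by
      intro i _
      have h1 : HasDerivAt (fun t : ℝ => A i + B i * t) (B i) t0 := by
        simpa using ((hasDerivAt_id t0).const_mul (B i)).const_add (A i)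
      have := (h1.exp).const_mul (b i)
      exact this.congr_deriv (by ring)
    simpa using HasDerivAt.fun_sum this
  have hpos := aux_sum_exp_pos b (fun i => A i + B i * t0) hb j hj
  exact hsum.log hpos.ne'

lemma aux_approx_critical {E : Type*} [NormedAddCommGroup E] [NormedSpace ℝ E] [ProperSpace E]
    (G : E → ℝ) (D : E → E → ℝ) (hcont : Continuous G)
    (hD : ∀ p u : E, HasDerivAt (fun t : ℝ => G (p + t • u)) (D p u) 0)
    (hconv : ∀ p u : E, ConvexOn ℝ Set.univ (fun t : ℝ => G (p + t • u)))
    (m : ℝ) (hbdd : ∀ p, m ≤ G p)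
    (hadd : ∀ p u w, D p (u + w) = D p u + D p w)
    {ε : ℝ} (hε : 0 < ε) :
    ∃ p : E, ∀ u : E, ‖u‖ ≤ 1 → |D p u| ≤ ε := by
  have hne : (Set.range G).Nonempty := ⟨G 0, 0, rfl⟩
  have hbb : BddBelow (Set.range G) := ⟨m, by rintro _ ⟨p, rfl⟩; exact hbdd p⟩
  set M := sInf (Set.range G) with hM
  have hMle : ∀ p, M ≤ G p := fun p => csInf_le hbb ⟨p, rfl⟩
  obtain ⟨_, ⟨ξ0, rfl⟩, hξ0⟩ : ∃ a ∈ Set.range G, a < M + ε :=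
    exists_lt_of_csInf_lt hne (by linarith [hε])
  have hK : IsCompact (Metric.closedBall ξ0 1) := isCompact_closedBall ξ0 1
  obtain ⟨p, hpK, hpmin⟩ := hK.exists_isMinOn ⟨ξ0, Metric.mem_closedBall_self zero_le_one⟩
    hcont.continuousOn
  have hslope : ∀ u : E, Filter.Tendsto (slope (fun t : ℝ => G (p + t • u)) 0)
      (nhdsWithin 0 (Set.Ioi 0)) (nhds (D p u)) := by
    intro u
    have h1 := (hD p u).hasDerivWithinAt (s := Set.Ioi (0:ℝ))
    rw [hasDerivWithinAt_iff_tendsto_slope] at h1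
    simpa [Set.diff_singleton_eq_self (by simp : (0:ℝ) ∉ Set.Ioi (0:ℝ))] using h1
  have key1 : ∀ q ∈ Metric.closedBall ξ0 1, 0 ≤ D p (q - p) := by
    intro q hq
    refine ge_of_tendsto (hslope (q - p)) ?_
    filter_upwards [Ioc_mem_nhdsGT_of_mem (Set.mem_Ico.2 ⟨le_refl (0:ℝ), zero_lt_one⟩)]
      with τ hτ
    have hmem : p + τ • (q - p) ∈ Metric.closedBall ξ0 1 := by
      have h2 : p + τ • (q - p) = (1 - τ) • p + τ • q := by
        rw [smul_sub, sub_smul, one_smul]; abel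
      rw [h2]
      exact (convex_closedBall ξ0 1) hpK hq (by linarith [hτ.2]) hτ.1.le (by ring)
    have hG : G p ≤ G (p + τ • (q - p)) := hpmin hmem
    show 0 ≤ slope (fun t : ℝ => G (p + t • (q - p))) 0 τ
    rw [slope_def_field]
    simp only [zero_smul, add_zero, sub_zero]
    exact div_nonneg (by linarith [hG]) hτ.1.le
  have key2 : D p (ξ0 - p) ≤ ε := by
    have hle : D p (ξ0 - p) ≤ G ξ0 - G p := by
      refine le_of_tendsto (hslope (ξ0 - p)) ?_
      filter_upwards [Ioc_mem_nhdsGT_of_mem (Set.mem_Ico.2 ⟨le_refl (0:ℝ), zero_lt_one⟩)]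
        with τ hτ
      have hsec := (hconv p (ξ0 - p)).secant_mono (Set.mem_univ (0:ℝ)) (Set.mem_univ τ)
        (Set.mem_univ (1:ℝ)) hτ.1.ne' one_ne_zero hτ.2
      simp only [zero_smul, add_zero, one_smul, sub_zero] at hsec
      rw [slope_def_field]
      simp only [zero_smul, add_zero, sub_zero]
      calc (G (p + τ • (ξ0 - p)) - G p) / τ ≤ (G (p + (ξ0 - p)) - G p) / 1 := hsec
        _ = G ξ0 - G p := by rw [div_one, add_sub_cancel]
    have := hMle p
    linarith [hξ0]
  have hzero : D p 0 = 0 := by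
    have := hadd p 0 0; simpa using this
  have hneg : ∀ u, D p (-u) = - D p u := by
    intro u
    have := hadd p u (-u)
    simp only [add_neg_cancel, hzero] at this
    linarith
  refine ⟨p, fun u hu => ?_⟩
  have hq1 : ξ0 + u ∈ Metric.closedBall ξ0 1 := by
    rw [Metric.mem_closedBall, dist_eq_norm]; simpa using hu
  have hq2 : ξ0 + -u ∈ Metric.closedBall ξ0 1 := by
    rw [Metric.mem_closedBall, dist_eq_norm]; simpa using hu
  have h1 := key1 _ hq1
  have h2 := key1 _ hq2
  have e1 : ξ0 + u - p = u + (ξ0 - p) := by abel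
  have e2 : ξ0 + -u - p = -u + (ξ0 - p) := by abel
  rw [e1, hadd] at h1
  rw [e2, hadd, hneg] at h2
  rw [abs_le]
  constructor <;> linarith [key2, h1, h2]

lemma aux_norm_smul_clm {V : Type*} [NormedAddCommGroup V] [InnerProductSpace ℝ V]
    (𝔞 : Submodule ℝ (V →L[ℝ] V)) (r : ℝ) (ξ' : 𝔞) : ‖r • ξ'‖ = ‖r‖ * ‖ξ'‖ := by
  have h := norm_smul (β := V →L[ℝ] V) r (ξ' : V →L[ℝ] V)
  calc ‖r • ξ'‖ = ‖r • (ξ' : V →L[ℝ] V)‖ := by norm_cast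
    _ = ‖r‖ * ‖(ξ' : V →L[ℝ] V)‖ := h
    _ = ‖r‖ * ‖ξ'‖ := rfl

set_option maxHeartbeats 2000000 in
set_option synthInstance.maxHeartbeats 400000 in
/-- The projective gradient map `μ̃_𝔞([y])(ξ) = ⟪ξy,y⟫/‖y‖²` maps the closure of the projective
orbit `A·[x]` (represented by the closure of the normalized orbit on the unit sphere) onto the
polytope `P_I = Conv{α_i : i ∈ supp x}`. -/
theorem projective_gradientMap_image_closure_orbit
    (V : Type*) [NormedAddCommGroup V] [InnerProductSpace ℝ V] [FiniteDimensional ℝ V]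
    (n : ℕ) (𝔞 : Submodule ℝ (V →L[ℝ] V))
    (habelian : ∀ ξ η : 𝔞, (ξ : V →L[ℝ] V) * η = (η : V →L[ℝ] V) * ξ)
    (v : OrthonormalBasis (Fin n) ℝ V) (α : Fin n → (𝔞 →ₗ[ℝ] ℝ))
    (heig : ∀ (ξ : 𝔞) (i : Fin n), (ξ : V →L[ℝ] V) (v i) = α i ξ • v i)
    (x : V) (hx : x ≠ 0)
    (μ : V → 𝔞 → ℝ)
    (hμ : ∀ (y : V) (ξ : 𝔞), μ y ξ = ⟪(ξ : V →L[ℝ] V) y, y⟫ / (‖y‖ ^ 2)) :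
    μ '' closure {y : V | ∃ ξ : 𝔞,
        y = ‖NormedSpace.exp (ξ : V →L[ℝ] V) x‖⁻¹ • NormedSpace.exp (ξ : V →L[ℝ] V) x} =
      {φ : 𝔞 → ℝ | ∃ s : Fin n → ℝ, (∀ i, 0 ≤ s i) ∧ (∀ i, ⟪x, v i⟫ = 0 → s i = 0) ∧
        (∑ i, s i = 1) ∧ φ = fun ξ : 𝔞 => ∑ i, s i * α i ξ} := by
  classical
  set c : Fin n → ℝ := fun i => ⟪x, v i⟫ with hc
  have hxsum : x = ∑ i, c i • v i := by
    have := v.sum_repr x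
    conv_lhs => rw [← this]
    congr 1; ext i; rw [v.repr_apply_apply, real_inner_comm]
  have hinner : ∀ a b : Fin n → ℝ, ⟪∑ i, a i • v i, ∑ i, b i • v i⟫ = ∑ i, a i * b i := by
    intro a b
    simpa using v.orthonormal.inner_sum a b Finset.univ
  obtain ⟨i0, hi0⟩ : ∃ i, c i ≠ 0 := by
    by_contra h
    push_neg at h
    apply hx
    rw [hxsum]
    simp [h]
  set w : 𝔞 → Fin n → ℝ := fun ξ i => c i * Real.exp (α i ξ) with hwdef
  have hexp : ∀ ξ : 𝔞, NormedSpace.exp (ξ : V →L[ℝ] V) x = ∑ i, w ξ i • v i := by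
    intro ξ
    conv_lhs => rw [hxsum]
    rw [map_sum]
    refine Finset.sum_congr rfl fun i _ => ?_
    rw [map_smul, aux_exp_eigen _ _ _ (heig ξ i), smul_smul]
  set N : 𝔞 → ℝ := fun ξ => ∑ i, (w ξ i) ^ 2 with hNdef
  have hNpos : ∀ ξ, 0 < N ξ := by
    intro ξ
    have h1 : 0 < (w ξ i0) ^ 2 := by
      have : w ξ i0 ≠ 0 := mul_ne_zero hi0 (Real.exp_pos _).ne'
      positivity
    exact lt_of_lt_of_le h1 (Finset.single_le_sum (f := fun i => (w ξ i) ^ 2)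
      (fun i _ => sq_nonneg _) (Finset.mem_univ i0))
  have hnormsq : ∀ ξ : 𝔞, ‖NormedSpace.exp (ξ : V →L[ℝ] V) x‖ ^ 2 = N ξ := by
    intro ξ
    rw [← real_inner_self_eq_norm_sq, hexp, hinner]
    exact Finset.sum_congr rfl fun i _ => (sq (w ξ i)).symm
  have hexp_ne : ∀ ξ : 𝔞, NormedSpace.exp (ξ : V →L[ℝ] V) x ≠ 0 := by
    intro ξ hz
    have := hnormsq ξ
    rw [hz] at this
    simp at this
    exact (hNpos ξ).ne this
  set s : 𝔞 → Fin n → ℝ := fun ξ i => (w ξ i) ^ 2 / N ξ with hsdef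
  have hssum : ∀ ξ, ∑ i, s ξ i = 1 := by
    intro ξ
    rw [hsdef, ← Finset.sum_div]
    exact div_self (hNpos ξ).ne'
  -- inner product with operator applied
  have hop : ∀ (η : 𝔞) (d : Fin n → ℝ),
      ⟪(η : V →L[ℝ] V) (∑ i, d i • v i), ∑ i, d i • v i⟫ = ∑ i, α i η * (d i) ^ 2 := by
    intro η d
    rw [map_sum]
    have : ∀ i, (η : V →L[ℝ] V) (d i • v i) = (d i * α i η) • v i := by
      intro i; rw [map_smul, heig, smul_smul]
    rw [Finset.sum_congr rfl fun i _ => this i, hinner]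
    exact Finset.sum_congr rfl fun i _ => by ring
  -- μ on the orbit
  have hμorbit : ∀ (ξ ξ' : 𝔞),
      μ (‖NormedSpace.exp (ξ : V →L[ℝ] V) x‖⁻¹ • NormedSpace.exp (ξ : V →L[ℝ] V) x) ξ'
        = ∑ i, s ξ i * α i ξ' := by
    intro ξ ξ'
    rw [hμ]
    set z := NormedSpace.exp (ξ : V →L[ℝ] V) x with hz
    set r := ‖z‖⁻¹ with hr
    have hrpos : 0 < r := by
      rw [hr]
      exact inv_pos.2 (norm_pos_iff.2 (hexp_ne ξ))
    have hnum : ⟪(ξ' : V →L[ℝ] V) (r • z), r • z⟫ = r ^ 2 * ⟪(ξ' : V →L[ℝ] V) z, z⟫ := by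
      rw [map_smul, real_inner_smul_left, real_inner_smul_right]
      ring
    have hden : ‖r • z‖ ^ 2 = r ^ 2 * ‖z‖ ^ 2 := by
      rw [norm_smul, mul_pow, Real.norm_eq_abs, sq_abs]
    rw [hnum, hden, mul_div_mul_left _ _ (by positivity : (r:ℝ) ^ 2 ≠ 0)]
    have hnum2 : ⟪(ξ' : V →L[ℝ] V) z, z⟫ = ∑ i, α i ξ' * (w ξ i) ^ 2 := by
      rw [hz, hexp]; exact hop ξ' (w ξ)
    have hden2 : ‖z‖ ^ 2 = N ξ := by rw [hz]; exact hnormsq ξ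
    rw [hnum2, hden2, Finset.sum_div]
    refine Finset.sum_congr rfl fun i _ => ?_
    rw [hsdef]
    ring
  set Orb := {y : V | ∃ ξ : 𝔞,
      y = ‖NormedSpace.exp (ξ : V →L[ℝ] V) x‖⁻¹ • NormedSpace.exp (ξ : V →L[ℝ] V) x} with hOrb
  have hOrbSphere : Orb ⊆ Metric.sphere (0 : V) 1 := by
    rintro y ⟨ξ, rfl⟩
    simp only [Metric.mem_sphere, dist_zero_right]
    rw [norm_smul, norm_inv, norm_norm]
    exact inv_mul_cancel₀ (norm_ne_zero_iff.2 (hexp_ne ξ))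
  -- the target set
  set Δ : Set (Fin n → ℝ) :=
    {u | (∀ i, 0 ≤ u i) ∧ (∀ i, c i = 0 → u i = 0) ∧ ∑ i, u i = 1} with hΔ
  set Φ : (Fin n → ℝ) → (𝔞 → ℝ) := fun u ξ => ∑ i, u i * α i ξ with hΦ
  have hΦcont : Continuous Φ :=
    continuous_pi fun ξ => continuous_finset_sum _ fun i _ => (continuous_apply i).mul
      continuous_const
  have hΔcomp : IsCompact Δ := by
    have hclosed : IsClosed Δ := by
      have h1 : IsClosed {u : Fin n → ℝ | ∀ i, 0 ≤ u i} := by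
        have : {u : Fin n → ℝ | ∀ i, 0 ≤ u i} = ⋂ i, {u : Fin n → ℝ | 0 ≤ u i} := by
          ext u; simp
        rw [this]
        exact isClosed_iInter fun i => isClosed_le continuous_const (continuous_apply i)
      have h2 : IsClosed {u : Fin n → ℝ | ∀ i, c i = 0 → u i = 0} := by
        have : {u : Fin n → ℝ | ∀ i, c i = 0 → u i = 0}
            = ⋂ i ∈ {i | c i = 0}, {u : Fin n → ℝ | u i = 0} := by
          ext u; simp [Set.mem_iInter]
        rw [this]
        exact isClosed_biInter fun i _ => isClosed_eq (continuous_apply i) continuous_const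
      have h3 : IsClosed {u : Fin n → ℝ | ∑ i, u i = 1} :=
        isClosed_eq (continuous_finset_sum _ fun i _ => continuous_apply i) continuous_const
      exact h1.inter (h2.inter h3)
    have hsub : Δ ⊆ Set.pi Set.univ (fun _ : Fin n => Set.Icc (0:ℝ) 1) := by
      rintro u ⟨h1, _, h3⟩ i _
      refine ⟨h1 i, ?_⟩
      calc u i ≤ ∑ j, u j := Finset.single_le_sum (fun j _ => h1 j) (Finset.mem_univ i)
        _ = 1 := h3
    exact (isCompact_univ_pi fun _ => isCompact_Icc).of_isClosed_subset hclosed hsub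
  have hclosedS : IsClosed (Φ '' Δ) := (hΔcomp.image hΦcont).isClosed
  have hsΔ : ∀ ξ : 𝔞, s ξ ∈ Δ := by
    intro ξ
    refine ⟨fun i => div_nonneg (sq_nonneg _) (hNpos ξ).le, fun i hci => ?_, hssum ξ⟩
    rw [hsdef]
    simp only [hwdef, hci, zero_mul]
    simp
  -- convergence of μ along sequences converging to a unit vector
  have hμtend : ∀ (ξ' : 𝔞) (z : ℕ → V) (y : V), Filter.Tendsto z Filter.atTop (nhds y) →
      ‖y‖ = 1 → Filter.Tendsto (fun k => μ (z k) ξ') Filter.atTop (nhds (μ y ξ')) := by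
    intro ξ' z y hz hy
    simp only [hμ]
    refine Filter.Tendsto.div ?_ ?_ (by rw [hy]; norm_num)
    · exact Filter.Tendsto.inner ((((ξ' : V →L[ℝ] V).continuous).tendsto y).comp hz) hz
    · exact ((continuous_norm.tendsto y).comp hz).pow 2
  have hRHS : {φ : 𝔞 → ℝ | ∃ s : Fin n → ℝ, (∀ i, 0 ≤ s i) ∧ (∀ i, ⟪x, v i⟫ = 0 → s i = 0) ∧
      (∑ i, s i = 1) ∧ φ = fun ξ : 𝔞 => ∑ i, s i * α i ξ} = Φ '' Δ := by
    ext φ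
    constructor
    · rintro ⟨u, h1, h2, h3, rfl⟩
      exact ⟨u, ⟨h1, h2, h3⟩, rfl⟩
    · rintro ⟨u, ⟨h1, h2, h3⟩, rfl⟩
      exact ⟨u, h1, h2, h3, rfl⟩
  rw [hRHS]
  apply Set.Subset.antisymm
  · rintro φ' ⟨y, hy, rfl⟩
    obtain ⟨z, hzmem, hzlim⟩ := mem_closure_iff_seq_limit.1 hy
    have hynorm : ‖y‖ = 1 := by
      have hsub : closure Orb ⊆ Metric.sphere (0 : V) 1 :=
        closure_minimal hOrbSphere Metric.isClosed_sphere
      have := hsub hy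
      simpa using this
    have htd : Filter.Tendsto (fun k => μ (z k)) Filter.atTop (nhds (μ y)) := by
      rw [tendsto_pi_nhds]
      intro ξ'
      exact hμtend ξ' z y hzlim hynorm
    refine hclosedS.mem_of_tendsto htd (Filter.Eventually.of_forall fun k => ?_)
    obtain ⟨ξ, hξ⟩ := hzmem k
    refine ⟨s ξ, hsΔ ξ, ?_⟩
    funext ξ'
    rw [hξ, hμorbit ξ ξ']
  · rintro φ' ⟨t, ⟨ht0, htsupp, htsum⟩, rfl⟩
    set φf : 𝔞 → ℝ := Φ t with hφf
    set b : Fin n → ℝ := fun i => (c i) ^ 2 with hbdef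
    have hbnn : ∀ i, 0 ≤ b i := fun i => sq_nonneg _
    have hbi0 : 0 < b i0 := lt_of_le_of_ne (sq_nonneg _) (Ne.symm (pow_ne_zero 2 hi0))
    set L : Fin n → 𝔞 → ℝ := fun i ξ => 2 * (α i ξ - φf ξ) with hLdef
    have hφapp : ∀ ξ : 𝔞, φf ξ = ∑ i, t i * α i ξ := fun ξ => rfl
    have hφadd : ∀ ξ η : 𝔞, φf (ξ + η) = φf ξ + φf η := by
      intro ξ η
      simp only [hφapp, map_add, mul_add, Finset.sum_add_distrib]
    have hφsmul : ∀ (r : ℝ) (ξ : 𝔞), φf (r • ξ) = r * φf ξ := by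
      intro r ξ
      simp only [hφapp, map_smul, smul_eq_mul, Finset.mul_sum]
      exact Finset.sum_congr rfl fun i _ => by ring
    have hLadd : ∀ (i : Fin n) (ξ η : 𝔞), L i (ξ + η) = L i ξ + L i η := by
      intro i ξ η
      simp only [hLdef, map_add, hφadd]
      ring
    have hLsmul : ∀ (i : Fin n) (r : ℝ) (ξ : 𝔞), L i (r • ξ) = r * L i ξ := by
      intro i r ξ
      simp only [hLdef, map_smul, hφsmul, smul_eq_mul]
      ring
    set H : 𝔞 → ℝ := fun ξ => ∑ i, b i * Real.exp (L i ξ) with hHdef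
    have hHpos : ∀ ξ, 0 < H ξ := fun ξ => aux_sum_exp_pos b (fun i => L i ξ) hbnn i0 hbi0
    set G : 𝔞 → ℝ := fun ξ => Real.log (H ξ) with hGdef
    set D : 𝔞 → 𝔞 → ℝ := fun ξ u => (∑ i, b i * L i u * Real.exp (L i ξ)) / H ξ with hDdef
    have hLcont : ∀ i, Continuous (L i) := by
      intro i
      have h2 : Continuous φf := by
        simp only [hφf, hΦ]
        exact continuous_finset_sum _ fun j _ =>
          continuous_const.mul (α j).continuous_of_finiteDimensional
      exact continuous_const.mul (((α i).continuous_of_finiteDimensional).sub h2)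
    have hHcont : Continuous H :=
      continuous_finset_sum _ fun i _ => continuous_const.mul (Real.continuous_exp.comp (hLcont i))
    have hGcont : Continuous G := hHcont.log fun ξ => (hHpos ξ).ne'
    have hline : ∀ (p u : 𝔞) (i : Fin n) (τ : ℝ), L i (p + τ • u) = L i p + L i u * τ := by
      intro p u i τ
      rw [hLadd, hLsmul]
      ring
    have hGline : ∀ p u : 𝔞, (fun τ : ℝ => Real.log (∑ i, b i * Real.exp (L i p + L i u * τ)))
        = fun τ : ℝ => G (p + τ • u) := by
      intro p u
      funext τ
      simp only [hGdef, hHdef]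
      congr 1
      exact Finset.sum_congr rfl fun i _ => by rw [hline]
    have hD : ∀ p u : 𝔞, HasDerivAt (fun τ : ℝ => G (p + τ • u)) (D p u) 0 := by
      intro p u
      have h0 := aux_logsumexp_hasDerivAt b (fun i => L i p) (fun i => L i u) hbnn i0 hbi0 0
      rw [hGline p u] at h0
      convert h0 using 1
      simp only [hDdef, hHdef, mul_zero, add_zero]
    have hconv : ∀ p u : 𝔞, ConvexOn ℝ Set.univ (fun τ : ℝ => G (p + τ • u)) := by
      intro p u
      have h0 := aux_logsumexp_convex b (fun i => L i p) (fun i => L i u) hbnn i0 hbi0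
      rwa [hGline p u] at h0
    set J := Finset.univ.filter (fun i => t i ≠ 0) with hJdef
    have hJne : J.Nonempty := by
      have hne10 : ∑ i, t i ≠ 0 := by rw [htsum]; exact one_ne_zero
      obtain ⟨j, _, hj⟩ := Finset.exists_ne_zero_of_sum_ne_zero hne10
      exact ⟨j, by simp [hJdef, hj]⟩
    have hbJ : ∀ j ∈ J, 0 < b j := by
      intro j hj
      rw [hJdef, Finset.mem_filter] at hj
      have hcj : c j ≠ 0 := fun hc0 => hj.2 (htsupp j hc0)
      exact lt_of_le_of_ne (sq_nonneg _) (Ne.symm (pow_ne_zero 2 hcj))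
    set β := J.inf' hJne b with hβ
    have hβpos : 0 < β := by
      rw [hβ, Finset.lt_inf'_iff]
      exact hbJ
    have hbddG : ∀ ξ, Real.log β ≤ G ξ := by
      intro ξ
      obtain ⟨j, hjJ, hj⟩ : ∃ j ∈ J, 0 ≤ α j ξ - φf ξ := by
        by_contra hcon
        push_neg at hcon
        have hsum0 : ∑ i, t i * (α i ξ - φf ξ) = 0 := by
          have he : ∑ i, t i * (α i ξ - φf ξ)
              = (∑ i, t i * α i ξ) - (∑ i, t i) * φf ξ := by
            rw [Finset.sum_mul, ← Finset.sum_sub_distrib]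
            exact Finset.sum_congr rfl fun i _ => by ring
          rw [he, htsum, one_mul, ← hφapp, sub_self]
        have hlt : ∑ i, t i * (α i ξ - φf ξ) < 0 := by
          have hres : ∑ i, t i * (α i ξ - φf ξ) = ∑ j ∈ J, t j * (α j ξ - φf ξ) := by
            symm
            apply Finset.sum_subset (Finset.subset_univ J)
            intro i _ hiJ
            have hti : t i = 0 := by
              by_contra h'
              exact hiJ (by simp [hJdef, h'])
            rw [hti, zero_mul]
          rw [hres]
          have : ∀ j ∈ J, t j * (α j ξ - φf ξ) < 0 := by
            intro j hj
            rw [hJdef, Finset.mem_filter] at hj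
            exact mul_neg_of_pos_of_neg (lt_of_le_of_ne (ht0 j) (Ne.symm hj.2)) (hcon j (by simp [hJdef, hj.2]))
          exact Finset.sum_neg this hJne
        exact absurd hsum0 (ne_of_lt hlt)
      have hLj : 0 ≤ L j ξ := by
        simp only [hLdef]
        linarith
      have hHβ : β ≤ H ξ :=
        calc β ≤ b j := Finset.inf'_le b hjJ
          _ ≤ b j * Real.exp (L j ξ) :=
            le_mul_of_one_le_right (hbnn j) (Real.one_le_exp hLj)
          _ ≤ H ξ := Finset.single_le_sum (f := fun i => b i * Real.exp (L i ξ))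
            (fun i _ => mul_nonneg (hbnn i) (Real.exp_pos _).le) (Finset.mem_univ j)
      exact Real.log_le_log hβpos hHβ
    have hDadd : ∀ p u u' : 𝔞, D p (u + u') = D p u + D p u' := by
      intro p u u'
      simp only [hDdef]
      rw [← add_div]
      congr 1
      rw [← Finset.sum_add_distrib]
      refine Finset.sum_congr rfl fun i _ => ?_
      rw [hLadd]
      ring
    have hDsmul : ∀ (p : 𝔞) (r : ℝ) (u : 𝔞), D p (r • u) = r * D p u := by
      intro p r u
      simp only [hDdef]
      rw [← mul_div_assoc]
      congr 1
      rw [Finset.mul_sum]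
      refine Finset.sum_congr rfl fun i _ => ?_
      rw [hLsmul]
      ring
    have hcrit : ∀ k : ℕ, ∃ p : 𝔞, ∀ u : 𝔞, ‖u‖ ≤ 1 → |D p u| ≤ 1/((k:ℝ)+1) := by
      intro k
      clear_value G D
      exact aux_approx_critical G D hGcont hD hconv (Real.log β) hbddG hDadd (by positivity)
    choose ξs hξs using hcrit
    have hDval : ∀ (ξ u : 𝔞), D ξ u = 2 * ((∑ i, s ξ i * α i u) - φf u) := by
      intro ξ u
      set r := Real.exp (-(2 * φf ξ)) with hrdef
      have hrpos : 0 < r := Real.exp_pos _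
      have hbe : ∀ i, b i * Real.exp (L i ξ) = r * (w ξ i) ^ 2 := by
        intro i
        have h2 : (w ξ i) ^ 2 = b i * Real.exp (2 * α i ξ) := by
          simp only [hwdef, hbdef, mul_pow]
          rw [sq (Real.exp _), ← Real.exp_add, two_mul]
        rw [h2]
        have h3 : L i ξ = -(2 * φf ξ) + 2 * α i ξ := by
          simp only [hLdef]
          ring
        rw [h3, Real.exp_add, hrdef]
        ring
      have hHr : H ξ = r * N ξ := by
        simp only [hHdef, hNdef]
        rw [Finset.mul_sum]
        exact Finset.sum_congr rfl fun i _ => hbe i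
      have hnum : (∑ i, b i * L i u * Real.exp (L i ξ)) = r * (∑ i, (w ξ i) ^ 2 * L i u) := by
        rw [Finset.mul_sum]
        refine Finset.sum_congr rfl fun i _ => ?_
        calc b i * L i u * Real.exp (L i ξ) = (b i * Real.exp (L i ξ)) * L i u := by ring
          _ = r * ((w ξ i) ^ 2 * L i u) := by rw [hbe i]; ring
      simp only [hDdef]
      rw [hnum, hHr, mul_div_mul_left _ _ hrpos.ne']
      have hstep : (∑ i, (w ξ i) ^ 2 * L i u) / N ξ = ∑ i, s ξ i * L i u := by
        rw [Finset.sum_div]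
        refine Finset.sum_congr rfl fun i _ => ?_
        rw [hsdef]
        ring
      rw [hstep]
      have hexpand : ∑ i, s ξ i * L i u
          = 2 * ((∑ i, s ξ i * α i u) - (∑ i, s ξ i) * φf u) := by
        simp only [hLdef]
        have hterm : ∀ i, s ξ i * (2 * (α i u - φf u))
            = 2 * (s ξ i * α i u) - 2 * (s ξ i * φf u) := fun i => by ring
        rw [Finset.sum_congr rfl fun i _ => hterm i, Finset.sum_sub_distrib,
          ← Finset.mul_sum, ← Finset.mul_sum, ← Finset.sum_mul]
        ring
      rw [hexpand, hssum ξ, one_mul]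
    set y : ℕ → V := fun k =>
      ‖NormedSpace.exp ((ξs k : 𝔞) : V →L[ℝ] V) x‖⁻¹
        • NormedSpace.exp ((ξs k : 𝔞) : V →L[ℝ] V) x with hydef
    have hyOrb : ∀ k, y k ∈ Orb := fun k => ⟨ξs k, rfl⟩
    have hysph : ∀ k, y k ∈ Metric.sphere (0 : V) 1 := fun k => hOrbSphere (hyOrb k)
    obtain ⟨ylim, hylim_sph, σ, hσmono, hσtend⟩ :=
      (isCompact_sphere (0 : V) 1).tendsto_subseq hysph
    refine ⟨ylim, ?_, ?_⟩
    · exact mem_closure_of_tendsto hσtend (Filter.Eventually.of_forall fun j => hyOrb (σ j))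
    · funext ξ'
      have hnorm1 : ‖ylim‖ = 1 := by simpa using hylim_sph
      have h2 : Filter.Tendsto (fun j => μ (y (σ j)) ξ') Filter.atTop (nhds (μ ylim ξ')) :=
        hμtend ξ' (fun j => y (σ j)) ylim hσtend hnorm1
      have h3 : Filter.Tendsto (fun j => μ (y (σ j)) ξ') Filter.atTop (nhds (φf ξ')) := by
        have hbound : ∀ k : ℕ, |μ (y k) ξ' - φf ξ'| ≤ (‖ξ'‖ + 1) * (1/((k:ℝ)+1)) := by
          intro k
          have hμk : μ (y k) ξ' = ∑ i, s (ξs k) i * α i ξ' := hμorbit (ξs k) ξ'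
          have hupos : (0:ℝ) < ‖ξ'‖ + 1 := by positivity
          have hunorm : ‖(‖ξ'‖ + 1)⁻¹ • ξ'‖ ≤ 1 := by
            rw [aux_norm_smul_clm, norm_inv, Real.norm_eq_abs, abs_of_pos hupos,
              inv_mul_le_iff₀ hupos]
            linarith [norm_nonneg ξ']
          have hDu := hξs k ((‖ξ'‖ + 1)⁻¹ • ξ') hunorm
          have hξ'eq : ξ' = (‖ξ'‖ + 1) • ((‖ξ'‖ + 1)⁻¹ • ξ') := by
            rw [smul_smul, mul_inv_cancel₀ hupos.ne', one_smul]
          have hDbound : |D (ξs k) ξ'| ≤ (‖ξ'‖ + 1) * (1/((k:ℝ)+1)) := by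
            have hDs : D (ξs k) ξ' = (‖ξ'‖ + 1) * D (ξs k) ((‖ξ'‖ + 1)⁻¹ • ξ') := by
              conv_lhs => rw [hξ'eq]
              exact hDsmul _ _ _
            rw [hDs, abs_mul, abs_of_pos hupos]
            exact mul_le_mul_of_nonneg_left hDu hupos.le
          have hDv := hDval (ξs k) ξ'
          rw [hμk]
          have habs : |∑ i, s (ξs k) i * α i ξ' - φf ξ'| ≤ |D (ξs k) ξ'| := by
            rw [hDv, abs_mul, abs_two]
            have := abs_nonneg (∑ i, s (ξs k) i * α i ξ' - φf ξ')
            linarith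
          exact le_trans habs hDbound
        have hb2 : Filter.Tendsto (fun j : ℕ => (‖ξ'‖ + 1) * (1/((σ j : ℝ)+1)))
            Filter.atTop (nhds 0) := by
          have h4 : Filter.Tendsto (fun j : ℕ => 1/((σ j : ℝ)+1)) Filter.atTop (nhds 0) :=
            tendsto_one_div_add_atTop_nhds_zero_nat.comp hσmono.tendsto_atTop
          simpa using h4.const_mul (‖ξ'‖ + 1)
        rw [tendsto_iff_dist_tendsto_zero]
        apply squeeze_zero (fun j => dist_nonneg) (fun j => ?_) hb2
        rw [Real.dist_eq]
        exact hbound (σ j)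
      exact tendsto_nhds_unique h2 h3
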